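/- Let Ω > 0 and α, β ≥ 0, and set r = 1. Suppose p : ℕ³ → ℝ with p ≥ 0 and ∑_{(i,j,k)∈ℕ³} p(i,j,k) = 1 satisfies the minimal-model stationary master equation, p(0,0,0) = 0, and p(i,j,k) = 0 whenever (j,k) ≠ (0,0). Then p(n,0,0) = Ω^n/(n!·(e^Ω−1)) for all integers n ≥ 1. (Uniqueness of the truncated Poisson stationary distribution on each sole-survivor axis.) -/

import Mathlib

/-- Extension of `p : ℕ³ → ℝ` to `ℤ³`, vanishing whenever some coordinate is negative. -/
noncomputable def pext (p : ℕ → ℕ → ℕ → ℝ) (i j k : ℤ) : ℝ :=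
  if 0 ≤ i ∧ 0 ≤ j ∧ 0 ≤ k then p i.toNat j.toNat k.toNat else 0

/-- The stationary master equation of the minimal stochastic May–Leonard model
(parameters `r`, `Ω`, `α`, `β`). -/
noncomputable def MinME (r Ω α β : ℝ) (p : ℕ → ℕ → ℕ → ℝ) : Prop :=
  ∀ i j k : ℕ,
    r * (((i : ℝ) - 1) * pext p ((i : ℤ) - 1) j k
        + ((j : ℝ) - 1) * pext p i ((j : ℤ) - 1) k
        + ((k : ℝ) - 1) * pext p i j ((k : ℤ) - 1))
    + (1 / Ω) * (((i : ℝ) + 1) * ((i : ℝ) + α * (j : ℝ) + β * (k : ℝ)) * pext p ((i : ℤ) + 1) j k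
        + ((j : ℝ) + 1) * (β * (i : ℝ) + (j : ℝ) + α * (k : ℝ)) * pext p i ((j : ℤ) + 1) k
        + ((k : ℝ) + 1) * (α * (i : ℝ) + β * (j : ℝ) + (k : ℝ)) * pext p i j ((k : ℤ) + 1))
    - r * ((i : ℝ) + (j : ℝ) + (k : ℝ)) * pext p i j k
    - (1 / Ω) * ((i : ℝ) * ((i : ℝ) - 1 + α * (j : ℝ) + β * (k : ℝ))
        + (j : ℝ) * (β * (i : ℝ) + (j : ℝ) - 1 + α * (k : ℝ))
        + (k : ℝ) * (α * (i : ℝ) + β * (j : ℝ) + (k : ℝ) - 1)) * pext p i j k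
    = 0

lemma pext_nat (p : ℕ → ℕ → ℕ → ℝ) (i j k : ℕ) : pext p i j k = p i j k := by
  simp [pext]

/-- Uniqueness of the truncated Poisson stationary distribution on a sole-survivor axis. -/
theorem minimal_axis_stationary_unique
    (Ω α β : ℝ) (hΩ : 0 < Ω) (hα : 0 ≤ α) (hβ : 0 ≤ β)
    (p : ℕ → ℕ → ℕ → ℝ) (hnn : ∀ i j k : ℕ, 0 ≤ p i j k)
    (hsum : HasSum (fun n : ℕ × ℕ × ℕ => p n.1 n.2.1 n.2.2) 1)
    (hME : MinME 1 Ω α β p)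
    (h0 : p 0 0 0 = 0)
    (haxis : ∀ i j k : ℕ, ¬(j = 0 ∧ k = 0) → p i j k = 0) :
    ∀ n : ℕ, 1 ≤ n → p n 0 0 = Ω ^ n / ((Nat.factorial n : ℝ) * (Real.exp Ω - 1)) := by
  have hΩ' : Ω ≠ 0 := ne_of_gt hΩ
  have h10 : ∀ x, p x 1 0 = 0 := fun x => haxis x 1 0 (by simp)
  have h01 : ∀ x, p x 0 1 = 0 := fun x => haxis x 0 1 (by simp)
  -- the master equation restricted to the axis, Ω-cleared
  have C : ∀ i : ℕ, Ω * ((i : ℝ) * p i 0 0)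
      = ((i : ℝ) + 1) * (i : ℝ) * p (i + 1) 0 0 := by
    intro i
    induction i with
    | zero => simp
    | succ n ih =>
      have h := hME (n + 1) 0 0
      have e1 : ((n + 1 : ℕ) : ℤ) - 1 = ((n : ℕ) : ℤ) := by push_cast; ring
      have e2 : ((n + 1 : ℕ) : ℤ) + 1 = ((n + 2 : ℕ) : ℤ) := by push_cast; ring
      have e3 : ((0 : ℕ) : ℤ) - 1 = (-1 : ℤ) := by norm_num
      have e4 : ((0 : ℕ) : ℤ) + 1 = ((1 : ℕ) : ℤ) := by norm_num
      rw [e1, e2, e3, e4, pext_nat, pext_nat, pext_nat, pext_nat, pext_nat] at h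
      simp only [pext, show ¬((0:ℤ) ≤ -1) by norm_num, and_false, false_and, if_false,
        h10, h01] at h
      push_cast at h ⊢
      field_simp at h
      have e5 : n + 1 + 1 = n + 2 := by omega
      rw [e5]
      linear_combination ih - h
  have rec1 : ∀ i : ℕ, 1 ≤ i → ((i : ℝ) + 1) * p (i + 1) 0 0 = Ω * p i 0 0 := by
    intro i hi
    have hi' : (i : ℝ) ≠ 0 := Nat.cast_ne_zero.mpr (by omega)
    apply mul_left_cancel₀ hi'
    linear_combination -C i
  -- closed form
  have F : ∀ n : ℕ, p (n + 1) 0 0 * (Nat.factorial (n + 1) : ℝ) = p 1 0 0 * Ω ^ n := by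
    intro n
    induction n with
    | zero => simp
    | succ n ih =>
      have hr := rec1 (n + 1) (by omega)
      rw [Nat.factorial_succ]
      push_cast at hr ⊢
      linear_combination ((Nat.factorial (n + 1) : ℝ)) * hr + Ω * ih
  -- sum over the axis
  have hf : Function.Injective (fun n : ℕ => ((n, 0, 0) : ℕ × ℕ × ℕ)) := by
    intro a b hab; simpa using hab
  have hzero : ∀ x : ℕ × ℕ × ℕ, x ∉ Set.range (fun n : ℕ => ((n, 0, 0) : ℕ × ℕ × ℕ)) →
      p x.1 x.2.1 x.2.2 = 0 := by
    rintro ⟨i, j, k⟩ hx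
    apply haxis
    rintro ⟨rfl, rfl⟩
    exact hx ⟨i, rfl⟩
  have hq1 : HasSum (fun n : ℕ => p n 0 0) 1 :=
    (Function.Injective.hasSum_iff hf hzero).mpr hsum
  set c : ℝ := p 1 0 0 / Ω with hc
  have hform : ∀ n : ℕ, 1 ≤ n → p n 0 0 = c * (Ω ^ n / (Nat.factorial n : ℝ)) := by
    intro n hn
    obtain ⟨m, rfl⟩ : ∃ m, n = m + 1 := ⟨n - 1, by omega⟩
    have hF := F m
    have hfac : ((Nat.factorial (m + 1) : ℕ) : ℝ) ≠ 0 := by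
      exact_mod_cast Nat.factorial_ne_zero (m + 1)
    rw [hc]
    field_simp
    linear_combination Ω * hF
  have hexp : HasSum (fun n : ℕ => c * (Ω ^ n / (Nat.factorial n : ℝ))) (c * Real.exp Ω) := by
    apply HasSum.mul_left
    rw [Real.exp_eq_exp_ℝ]
    exact NormedSpace.expSeries_div_hasSum_exp Ω
  have hupd := hexp.update 0 0
  have heq : (fun n : ℕ => p n 0 0)
      = Function.update (fun n : ℕ => c * (Ω ^ n / (Nat.factorial n : ℝ))) 0 0 := by
    funext n
    rcases Nat.eq_zero_or_pos n with rfl | hn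
    · simpa using h0
    · rw [Function.update_of_ne (by omega), hform n hn]
  rw [← heq] at hupd
  have h1 : (1 : ℝ) = c * Real.exp Ω - c := by
    have := hq1.unique hupd
    simp at this
    linarith
  have hexp1 : Real.exp Ω - 1 ≠ 0 := by
    have : 1 < Real.exp Ω := Real.one_lt_exp_iff.mpr hΩ
    linarith
  have hcval : c = 1 / (Real.exp Ω - 1) := by
    field_simp
    linear_combination -h1
  intro n hn
  rw [hform n hn, hcval]
  have hfac : ((Nat.factorial n : ℕ) : ℝ) ≠ 0 := by
    exact_mod_cast Nat.factorial_ne_zero n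
  field_simp
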